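/- arXiv:1501.02605 — 2 statements merged into one kernel-verified Lean document; each statement's English description precedes it below -/
import Mathlib

section
/- The Catalan constant K = ∑_{j=0}^{∞} (−1)^j/(2j+1)^2 satisfies K = ∑_{n=0}^{∞} n! · (H_{2n+1} − H_n/2) / (2 · (2n+1)!!), where H_n is the n-th harmonic number and (2n+1)!! = 1·3·5⋯(2n+1) is the double factorial. -/
open Nat Finset


-- alternating Pascal recurrence
lemma pascal_sum (f : ℕ → ℝ) (n : ℕ) :
    ∑ k ∈ range (n+2), (-1:ℝ)^k * (n+1).choose k * f k
      = ∑ k ∈ range (n+1), (-1:ℝ)^k * n.choose k * f k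
        - ∑ k ∈ range (n+1), (-1:ℝ)^k * n.choose k * f (k+1) := by
  rw [Finset.sum_range_succ' (fun k => (-1:ℝ)^k * (n+1).choose k * f k) (n+1)]
  have : ∀ k, (-1:ℝ)^(k+1) * ((n+1).choose (k+1)) * f (k+1)
      = (-1:ℝ)^(k+1) * (n.choose k) * f (k+1) + (-1:ℝ)^(k+1) * (n.choose (k+1)) * f (k+1) := by
    intro k
    rw [Nat.choose_succ_succ]
    push_cast
    ring
  rw [Finset.sum_congr rfl (fun k _ => this k), Finset.sum_add_distrib]
  rw [Finset.sum_range_succ' (fun k => (-1:ℝ)^k * n.choose k * f k) n]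
  have h2 : ∑ k ∈ range (n+1), (-1:ℝ)^(k+1) * (n.choose k) * f (k+1)
      = - ∑ k ∈ range (n+1), (-1:ℝ)^k * n.choose k * f (k+1) := by
    rw [← Finset.sum_neg_distrib]
    exact Finset.sum_congr rfl (fun k _ => by ring)
  have h3 : ∑ k ∈ range (n+1), (-1:ℝ)^(k+1) * (n.choose (k+1)) * f (k+1)
      = ∑ k ∈ range n, (-1:ℝ)^(k+1) * (n.choose (k+1)) * f (k+1) := by
    rw [Finset.sum_range_succ]
    simp
  rw [h2, h3]
  have h4 : ∑ k ∈ range n, (-1:ℝ)^(k+1) * (n.choose (k+1)) * f (k+1)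
      = ∑ k ∈ range (n+1), (-1:ℝ)^k * n.choose k * f k - f 0 := by
    rw [Finset.sum_range_succ' (fun k => (-1:ℝ)^k * n.choose k * f k) n]
    simp
  rw [h4]
  simp only [Nat.choose_zero_right, Nat.cast_one]
  ring

lemma prodP_pos (n : ℕ) {a : ℝ} (ha : 0 < a) : 0 < ∏ i ∈ range (n+1), (a + i) :=
  Finset.prod_pos (fun i _ => by positivity)

lemma prodP_succ (n : ℕ) (a : ℝ) :
    ∏ i ∈ range (n+2), (a + i) = (∏ i ∈ range (n+1), (a + i)) * (a + (n+1)) := by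
  rw [Finset.prod_range_succ]; push_cast; ring

lemma prodP_shift (n : ℕ) (a : ℝ) :
    ∏ i ∈ range (n+2), (a + i) = a * ∏ i ∈ range (n+1), ((a+1) + i) := by
  rw [Finset.prod_range_succ' (fun i => (a + i))]
  have h : ∏ k ∈ range (n+1), (a + ((k+1:ℕ):ℝ)) = ∏ i ∈ range (n+1), (a+1+(i:ℝ)) :=
    Finset.prod_congr rfl (fun i _ => by push_cast; ring)
  rw [h]
  push_cast
  ring

lemma L1 (n : ℕ) : ∀ a : ℝ, 0 < a →
    ∑ k ∈ range (n+1), (-1:ℝ)^k * n.choose k * (1/(a+k))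
      = n.factorial / ∏ i ∈ range (n+1), (a + i) := by
  induction n with
  | zero => intro a ha; simp
  | succ n ih =>
    intro a ha
    rw [pascal_sum (fun k => 1/(a+k)) n, ih a ha]
    have h1 : ∑ k ∈ range (n+1), (-1:ℝ)^k * n.choose k * (1/(a+((k+1:ℕ):ℝ)))
        = n.factorial / ∏ i ∈ range (n+1), ((a+1) + i) := by
      rw [← ih (a+1) (by linarith)]
      apply Finset.sum_congr rfl; intro k _; push_cast; ring_nf
    rw [h1]
    have hQ := prodP_pos n ha
    have hQ' := prodP_pos n (show (0:ℝ) < a+1 by linarith)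
    have key : a * ∏ i ∈ range (n+1), ((a+1) + i)
        = (∏ i ∈ range (n+1), (a + i)) * (a + (n+1)) := by
      rw [← prodP_shift, prodP_succ]
    rw [prodP_succ]
    have hn1 : (0:ℝ) < a + (n+1) := by positivity
    field_simp
    push_cast [Nat.factorial_succ]
    linear_combination (n.factorial:ℝ) * key

lemma L2 (n : ℕ) : ∀ a : ℝ, 0 < a →
    ∑ k ∈ range (n+1), (-1:ℝ)^k * n.choose k * (1/(a+k)^2)
      = (n.factorial / ∏ i ∈ range (n+1), (a + i)) * ∑ i ∈ range (n+1), 1/(a+i) := by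
  induction n with
  | zero => intro a ha; simp [pow_two]
  | succ n ih =>
    intro a ha
    have ha1 : (0:ℝ) < a + 1 := by linarith
    have hQ := prodP_pos n ha
    have hQ' := prodP_pos n ha1
    have hn1 : (0:ℝ) < a + ((n:ℝ)+1) := by positivity
    have key : a * ∏ i ∈ range (n+1), (a + 1 + (i:ℝ))
        = (∏ i ∈ range (n+1), (a + (i:ℝ))) * (a + ((n:ℝ)+1)) := by
      rw [← prodP_shift, prodP_succ]
    rw [pascal_sum (fun k => 1/(a+k)^2) n, ih a ha]
    have h1 : ∑ k ∈ range (n+1), (-1:ℝ)^k * n.choose k * (1/(a+((k+1:ℕ):ℝ))^2)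
        = (n.factorial / ∏ i ∈ range (n+1), ((a+1) + i)) * ∑ i ∈ range (n+1), 1/((a+1)+i) := by
      rw [← ih (a+1) ha1]
      exact Finset.sum_congr rfl (fun k _ => by push_cast; ring_nf)
    rw [h1, prodP_succ]
    have e1 : ∑ i ∈ range (n+2), 1/(a+(i:ℝ))
        = (∑ i ∈ range (n+1), 1/(a+(i:ℝ))) + 1/(a+((n:ℝ)+1)) := by
      rw [Finset.sum_range_succ]; push_cast; ring
    have e2 : ∑ i ∈ range (n+1), 1/((a+1)+(i:ℝ))
        = (∑ i ∈ range (n+2), 1/(a+(i:ℝ))) - 1/a := by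
      rw [Finset.sum_range_succ' (fun i => 1/(a+(i:ℝ)))]
      push_cast
      have : ∑ i ∈ range (n+1), 1/(a+((i:ℝ)+1)) = ∑ i ∈ range (n+1), 1/((a+1)+(i:ℝ)) :=
        Finset.sum_congr rfl (fun i _ => by ring_nf)
      rw [this]; ring
    rw [e1, e2]
    have e1' : (a + ((n:ℝ)+1)) * (∑ i ∈ range (n+2), 1/(a+(i:ℝ)))
        = (a + ((n:ℝ)+1)) * (∑ i ∈ range (n+1), 1/(a+(i:ℝ))) + 1 := by
      rw [e1]; field_simp
    set Q := ∏ i ∈ range (n+1), (a + (i:ℝ)) with hQdef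
    set Q' := ∏ i ∈ range (n+1), (a + 1 + (i:ℝ)) with hQ'def
    set S := ∑ i ∈ range (n+1), 1/(a+(i:ℝ)) with hSdef
    set T := ∑ i ∈ range (n+2), 1/(a+(i:ℝ)) with hTdef
    set A := a + ((n:ℝ)+1) with hAdef
    field_simp
    push_cast [Nat.factorial_succ]
    linear_combination ((n.factorial:ℝ) * (S*A^2 - ((n:ℝ)+1)*(S*A+1))) * key
      + (-a*(n.factorial:ℝ) * Q*A) * e1' 


-- product formula for double factorial
lemma dfac_prod (n : ℕ) :
    ∏ i ∈ range (n+1), ((1:ℝ)/2 + i) = (Nat.doubleFactorial (2*n+1) : ℝ) / 2^(n+1) := by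
  induction n with
  | zero => simp [Nat.doubleFactorial]
  | succ n ih =>
    rw [Finset.prod_range_succ, ih]
    have : 2*(n+1)+1 = (2*n+1)+2 := by ring
    rw [this, Nat.doubleFactorial]
    push_cast
    ring

-- odd harmonic
lemma harmonic_odd (n : ℕ) :
    (harmonic (2*n+1) : ℝ) - (harmonic n : ℝ)/2 = ∑ k ∈ range (n+1), 1/(2*(k:ℝ)+1) := by
  induction n with
  | zero => simp [harmonic_succ]
  | succ n ih =>
    have e1 : harmonic (2*(n+1)+1) = harmonic (2*n+1) + (((2*n+2 : ℕ)):ℚ)⁻¹ + (((2*n+3 : ℕ)):ℚ)⁻¹ := by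
      rw [show 2*(n+1)+1 = (2*n+2)+1 from by ring, harmonic_succ,
        show 2*n+2 = (2*n+1)+1 from by ring, harmonic_succ]
    have e2 : harmonic (n+1) = harmonic n + (((n+1:ℕ)):ℚ)⁻¹ := harmonic_succ n
    rw [e1, e2, Finset.sum_range_succ, ← ih]
    push_cast
    field_simp
    ring

-- column sum: ∑_{n ≥ k} C(n,k)/2^(n+1) = 1
lemma colsum (k : ℕ) :
    HasSum (fun n : ℕ => if k ≤ n then (n.choose k : ℝ)/2^(n+1) else 0) 1 := by
  set f : ℕ → ℝ := fun n => if k ≤ n then (n.choose k : ℝ)/2^(n+1) else 0 with hf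
  have h2 : ‖(1/2 : ℝ)‖ < 1 := by norm_num
  have H2 := (hasSum_choose_mul_geometric_of_norm_lt_one (𝕜 := ℝ) k h2).mul_right ((1/2:ℝ)^(k+1))
  have hv : (1/(1-(1/2:ℝ))^(k+1)) * (1/2:ℝ)^(k+1) = 1 := by norm_num
  rw [hv] at H2
  have hinj : Function.Injective (fun m : ℕ => m + k) := add_left_injective k
  have hvan : ∀ x ∉ Set.range (fun m : ℕ => m + k), f x = 0 := by
    intro x hx
    simp only [Set.mem_range, not_exists] at hx
    have : ¬ (k ≤ x) := fun h => hx (x - k) (by omega)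
    simp [hf, this]
  have hcomp : (fun m : ℕ => ((m + k).choose k : ℝ) * (1/2:ℝ)^m * (1/2:ℝ)^(k+1))
      = f ∘ (fun m => m + k) := by
    funext m
    have hk : k ≤ m + k := by omega
    simp only [Function.comp, hf, hk, if_true]
    rw [eq_div_iff (by positivity)]
    have h1 : ((1/2:ℝ))^m * ((1/2:ℝ)^(k+1) * (2:ℝ)^(m+k+1)) = 1 := by
      rw [← mul_assoc, ← pow_add, one_div, inv_pow, inv_mul_eq_one₀ (by positivity)]
      rfl
    rw [mul_assoc, mul_assoc, h1, mul_one]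
  rw [hcomp] at H2
  exact (Function.Injective.hasSum_iff hinj hvan).mp H2


noncomputable def cc (n k : ℕ) : ℝ :=
  if k ≤ n then (-1:ℝ)^k * n.choose k / ((2*(k:ℝ)+1)^2 * 2^(n+1)) else 0

-- choose identity: (k+1)(k+2) C(n+2,k+2) = (n+1)(n+2) C(n,k)
lemma choose_shift (n k : ℕ) :
    (k+1) * (k+2) * (n+2).choose (k+2) = (n+1) * (n+2) * n.choose k := by
  have h1 := Nat.add_one_mul_choose_eq n k
  have h2 := Nat.add_one_mul_choose_eq (n+1) (k+1)
  calc (k+1) * (k+2) * (n+2).choose (k+2)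
      = (k+1) * ((n+2).choose (k+2) * (k+2)) := by ring
    _ = (k+1) * ((n+2) * (n+1).choose (k+1)) := by rw [← h2]
    _ = (n+2) * ((n+1).choose (k+1) * (k+1)) := by ring
    _ = (n+2) * ((n+1) * n.choose k) := by rw [← h1]
    _ = (n+1) * (n+2) * n.choose k := by ring

lemma abs_cc_bound (n : ℕ) :
    ∑ k ∈ range (n+1), |cc n k| ≤ 4 / (((n:ℝ)+1) * ((n:ℝ)+2)) := by
  have step : ∀ k ∈ range (n+1), |cc n k|
      ≤ (2 / (((n:ℝ)+1) * ((n:ℝ)+2) * 2^(n+1))) * ((n+2).choose (k+2)) := by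
    intro k hk
    rw [Finset.mem_range] at hk
    have hkn : k ≤ n := by omega
    have h1 : |cc n k| = (n.choose k : ℝ) / ((2*(k:ℝ)+1)^2 * 2^(n+1)) := by
      rw [cc, if_pos hkn, abs_div, abs_mul, abs_pow, abs_neg, abs_one, one_pow, one_mul,
        Nat.abs_cast, abs_of_pos (by positivity)]
    rw [h1]
    rw [div_le_iff₀ (by positivity)]
    have hcs : ((k:ℝ)+1) * ((k:ℝ)+2) * ((n+2).choose (k+2) : ℝ)
        = ((n:ℝ)+1) * ((n:ℝ)+2) * (n.choose k : ℝ) := by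
      have := choose_shift n k
      exact_mod_cast congrArg (fun m : ℕ => (m:ℝ)) this
    have hineq : ((k:ℝ)+1) * ((k:ℝ)+2) ≤ 2 * (2*(k:ℝ)+1)^2 := by nlinarith [sq_nonneg ((k:ℝ))]
    -- choose k ≥ 0 etc.
    have hc2 : (0:ℝ) ≤ ((n+2).choose (k+2) : ℝ) := by positivity
    have expand : (2 / (((n:ℝ)+1) * ((n:ℝ)+2) * 2^(n+1))) * ((n+2).choose (k+2))
        * ((2*(k:ℝ)+1)^2 * 2^(n+1))
        = (2 * (2*(k:ℝ)+1)^2) * ((n+2).choose (k+2) : ℝ) / (((n:ℝ)+1) * ((n:ℝ)+2)) := by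
      field_simp
    rw [expand, le_div_iff₀ (by positivity)]
    calc (n.choose k : ℝ) * (((n:ℝ)+1) * ((n:ℝ)+2))
        = ((k:ℝ)+1) * ((k:ℝ)+2) * ((n+2).choose (k+2) : ℝ) := by linear_combination -hcs
      _ ≤ (2 * (2*(k:ℝ)+1)^2) * ((n+2).choose (k+2) : ℝ) := by
          apply mul_le_mul_of_nonneg_right hineq hc2
  calc ∑ k ∈ range (n+1), |cc n k|
      ≤ ∑ k ∈ range (n+1), (2 / (((n:ℝ)+1) * ((n:ℝ)+2) * 2^(n+1))) * ((n+2).choose (k+2)) :=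
        Finset.sum_le_sum step
    _ = (2 / (((n:ℝ)+1) * ((n:ℝ)+2) * 2^(n+1))) * ∑ k ∈ range (n+1), ((n+2).choose (k+2) : ℝ) := by
        rw [Finset.mul_sum]
    _ ≤ (2 / (((n:ℝ)+1) * ((n:ℝ)+2) * 2^(n+1))) * 2^(n+2) := by
        apply mul_le_mul_of_nonneg_left _ (by positivity)
        have hsub : ∑ k ∈ range (n+1), ((n+2).choose (k+2) : ℝ)
            ≤ ∑ j ∈ range (n+3), ((n+2).choose j : ℝ) := by
          have hran : n+3-2 = n+1 := by omega
          have : ∑ j ∈ Finset.Ico 2 (n+3), ((n+2).choose j : ℝ)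
              = ∑ k ∈ range (n+1), ((n+2).choose (k+2) : ℝ) := by
            rw [Finset.sum_Ico_eq_sum_range, hran]
            exact Finset.sum_congr rfl (fun i _ => by rw [Nat.add_comm 2 i])
          rw [← this]
          apply Finset.sum_le_sum_of_subset_of_nonneg
          · intro x hx; rw [Finset.mem_Ico] at hx; rw [Finset.mem_range]; omega
          · intro i _ _; positivity
        calc ∑ k ∈ range (n+1), ((n+2).choose (k+2) : ℝ)
            ≤ ∑ j ∈ range (n+3), ((n+2).choose j : ℝ) := hsub
          _ = 2^(n+2) := by
              rw [← Nat.cast_sum]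
              rw [show (n+3) = (n+2)+1 from rfl, Nat.sum_range_choose]
              push_cast; ring
    _ = 4 / (((n:ℝ)+1) * ((n:ℝ)+2)) := by
        field_simp
        ring

lemma rowsum (n : ℕ) :
    ∑ k ∈ range (n+1), cc n k
      = (n.factorial : ℝ) * (∑ k ∈ range (n+1), 1/(2*(k:ℝ)+1))
          / (2 * (Nat.doubleFactorial (2*n+1) : ℝ)) := by
  have hdf : (0:ℝ) < (Nat.doubleFactorial (2*n+1) : ℝ) := by
    exact_mod_cast Nat.doubleFactorial_pos _
  have h2 := L2 n (1/2) (by norm_num)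
  have e1 : ∀ k ∈ range (n+1), cc n k
      = (1/2^(n+3)) * ((-1:ℝ)^k * n.choose k * (1/((1/2:ℝ)+k)^2)) := by
    intro k hk
    rw [Finset.mem_range] at hk
    rw [cc, if_pos (by omega : k ≤ n)]
    have hk0 : (0:ℝ) < 2*(k:ℝ)+1 := by positivity
    field_simp
    ring
  rw [Finset.sum_congr rfl e1, ← Finset.mul_sum, h2, dfac_prod]
  have e2 : ∑ i ∈ range (n+1), 1/((1/2:ℝ)+i) = 2 * ∑ k ∈ range (n+1), 1/(2*(k:ℝ)+1) := by
    rw [Finset.mul_sum]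
    refine Finset.sum_congr rfl (fun i _ => ?_)
    have hi : ((1/2:ℝ)+i) ≠ 0 := by positivity
    field_simp
    ring
  rw [e2]
  field_simp
  ring


lemma cc_zero {n k : ℕ} (h : ¬ k ≤ n) : cc n k = 0 := by simp [cc, h]

lemma cc_col (k : ℕ) : HasSum (fun n => cc n k) ((-1:ℝ)^k / (2*(k:ℝ)+1)^2) := by
  have H := (colsum k).mul_left ((-1:ℝ)^k / (2*(k:ℝ)+1)^2)
  rw [mul_one] at H
  have heq : (fun n => ((-1:ℝ)^k / (2*(k:ℝ)+1)^2)
      * (if k ≤ n then (n.choose k : ℝ)/2^(n+1) else 0)) = fun n => cc n k := by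
    funext n
    by_cases h : k ≤ n
    · simp only [h, if_true, cc]
      rw [div_mul_div_comm ((-1:ℝ)^k) ((2*(k:ℝ)+1)^2) ((n.choose k : ℝ)) ((2:ℝ)^(n+1))]
    · simp [cc, h]
  rwa [heq] at H

lemma cc_abs_summable : Summable (fun p : ℕ × ℕ => |cc p.1 p.2|) := by
  rw [summable_prod_of_nonneg (fun p => abs_nonneg _)]
  have hvan : ∀ n : ℕ, ∀ k ∉ range (n+1), |cc n k| = 0 := by
    intro n k hk
    rw [Finset.mem_range] at hk
    rw [cc_zero (by omega), abs_zero]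
  constructor
  · intro n
    exact summable_of_ne_finset_zero (s := range (n+1)) (hvan n)
  · have hg : Summable (fun n : ℕ => 4 * (1/((n:ℝ)+1)^2)) := by
      apply Summable.mul_left
      have h := Real.summable_one_div_nat_pow.mpr (show 1 < 2 by norm_num)
      have h2 := (summable_nat_add_iff 1).mpr h
      apply h2.congr
      intro n
      push_cast
      ring
    apply Summable.of_nonneg_of_le (fun n => tsum_nonneg fun k => abs_nonneg _) _ hg
    intro n
    rw [tsum_eq_sum (hvan n)]
    calc ∑ k ∈ range (n+1), |cc n k| ≤ 4 / (((n:ℝ)+1) * ((n:ℝ)+2)) := abs_cc_bound n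
      _ ≤ 4 * (1/((n:ℝ)+1)^2) := by
          rw [div_le_iff₀ (by positivity)]
          have h1 : ((n:ℝ)+1)^2 > 0 := by positivity
          rw [show (4:ℝ) * (1/((n:ℝ)+1)^2) * (((n:ℝ)+1) * ((n:ℝ)+2))
            = 4 * (((n:ℝ)+2)/((n:ℝ)+1)) from by field_simp]
          rw [show (4:ℝ) = 4 * 1 from by ring]
          rw [show (4:ℝ) * 1 * (((n:ℝ)+2)/((n:ℝ)+1)) = 4 * (((n:ℝ)+2)/((n:ℝ)+1)) from by ring]
          apply mul_le_mul_of_nonneg_left _ (by norm_num)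
          rw [le_div_iff₀ (by positivity)]
          linarith

/-- The Catalan constant `K = ∑_{j=0}^{∞} (−1)^j/(2j+1)^2` satisfies
`K = ∑_{n=0}^{∞} n!·(H_{2n+1} − H_n/2)/(2·(2n+1)!!)`, where `H_n` is the `n`-th harmonic
number and `(2n+1)!!` is the double factorial. -/
theorem stmt5 :
    (∑' j : ℕ, (-1 : ℝ) ^ j / (2 * (j : ℝ) + 1) ^ 2)
      = ∑' n : ℕ, (n.factorial : ℝ) * ((harmonic (2 * n + 1) : ℝ) - (harmonic n : ℝ) / 2)
          / (2 * (Nat.doubleFactorial (2 * n + 1) : ℝ)) := by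
  have hsum : Summable (Function.uncurry (fun n k => cc n k)) := by
    rw [← summable_abs_iff]
    exact cc_abs_summable
  have hrow : ∀ n, Summable (fun k => cc n k) := fun n =>
    summable_of_ne_finset_zero (s := range (n+1)) (fun k hk => cc_zero (by
      rw [Finset.mem_range] at hk; omega))
  have hcol : ∀ k, Summable (fun n => cc n k) := fun k => (cc_col k).summable
  have hcomm : ∑' (k : ℕ) (n : ℕ), cc n k = ∑' (n : ℕ) (k : ℕ), cc n k :=
    Summable.tsum_comm' hsum hrow hcol
  calc (∑' j : ℕ, (-1 : ℝ) ^ j / (2 * (j : ℝ) + 1) ^ 2)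
      = ∑' (k : ℕ) (n : ℕ), cc n k := by
        refine tsum_congr fun k => ?_
        exact (cc_col k).tsum_eq.symm
    _ = ∑' (n : ℕ) (k : ℕ), cc n k := hcomm
    _ = ∑' n : ℕ, (n.factorial : ℝ) * ((harmonic (2 * n + 1) : ℝ) - (harmonic n : ℝ) / 2)
          / (2 * (Nat.doubleFactorial (2 * n + 1) : ℝ)) := by
        refine tsum_congr fun n => ?_
        rw [harmonic_odd]
        rw [tsum_eq_sum (s := range (n+1)) (fun k hk => cc_zero (by
          rw [Finset.mem_range] at hk; omega))]
        exact rowsum n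
end

section
/- Let f_n(x) = ∑_{j=0}^{∞} x^j · H_{j+1}^{(n)} for |x| < 1. Then f_0(x) = 1/(1−x), and for every n ≥ 1 and every x with 0 < |x| < 1, f_n(x) = (1/(x(1−x))) · ∫_0^x f_{n−1}(y) dy. -/
/-- The generalized harmonic numbers: `genH k n = H_n^{(k)}`, defined by `H_n^{(0)} = 1`
and `H_n^{(k)} = ∑_{j=1}^{n} H_j^{(k−1)}/j` for `k ≥ 1`. -/
noncomputable def genH : ℕ → ℕ → ℝ
  | 0, _ => 1
  | (k+1), n => ∑ j ∈ Finset.Icc 1 n, genH k j / (j : ℝ)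

lemma genH_nonneg : ∀ k n, 0 ≤ genH k n := by
  intro k
  induction k with
  | zero => intro n; simp [genH]
  | succ k ih =>
    intro n
    unfold genH
    exact Finset.sum_nonneg fun j _ => div_nonneg (ih j) (by positivity)

lemma genH_le : ∀ k n, 1 ≤ n → genH k n ≤ n := by
  intro k
  induction k with
  | zero => intro n hn; simp [genH]; exact_mod_cast hn
  | succ k ih =>
    intro n _
    unfold genH
    calc ∑ j ∈ Finset.Icc 1 n, genH k j / (j : ℝ) ≤ ∑ j ∈ Finset.Icc 1 n, 1 := by
          refine Finset.sum_le_sum fun j hj => ?_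
          have hj1 : 1 ≤ j := (Finset.mem_Icc.mp hj).1
          have : (0:ℝ) < j := by exact_mod_cast hj1
          rw [div_le_one this]
          exact ih j hj1
      _ = n := by simp [Nat.card_Icc]

lemma genH_rec (k j : ℕ) :
    genH (k+1) (j+1) = genH (k+1) j + genH k (j+1) / (j+1 : ℝ) := by
  show (∑ i ∈ Finset.Icc 1 (j+1), genH k i / (i : ℝ)) = _
  rw [← Finset.insert_Icc_right_eq_Icc_add_one (by omega), Finset.sum_insert (by simp)]
  show _ + genH (k+1) j = _
  push_cast
  ring

lemma genH_summable (n : ℕ) {x : ℝ} (hx : |x| < 1) :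
    Summable (fun j : ℕ => x ^ j * genH n (j + 1)) := by
  have hb : Summable (fun j : ℕ => (j + 1 : ℝ) * |x| ^ j) := by
    have h1 : Summable (fun j : ℕ => (j : ℝ) ^ 1 * |x| ^ j) :=
      summable_pow_mul_geometric_of_norm_lt_one 1 (by rwa [Real.norm_eq_abs, abs_abs])
    have h2 : Summable (fun j : ℕ => |x| ^ j) :=
      summable_geometric_of_lt_one (abs_nonneg x) hx
    simpa [add_mul, pow_one] using h1.add h2
  refine Summable.of_norm_bounded hb fun j => ?_
  rw [norm_mul, norm_pow, Real.norm_eq_abs, Real.norm_eq_abs,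
    abs_of_nonneg (genH_nonneg n (j+1))]
  have h1 : genH n (j+1) ≤ (j+1 : ℝ) := by
    have := genH_le n (j+1) (by omega); push_cast at this ⊢; linarith
  have h2 : (0:ℝ) ≤ |x| ^ j := by positivity
  rw [mul_comm ((j:ℝ)+1)]
  exact mul_le_mul_of_nonneg_left (by exact_mod_cast h1) h2

lemma aux_summable {r : ℝ} (hr : |r| < 1) :
    Summable (fun j : ℕ => ((j : ℝ) + 1) * |r| ^ j) := by
  have h1 : Summable (fun j : ℕ => (j : ℝ) ^ 1 * |r| ^ j) :=
    summable_pow_mul_geometric_of_norm_lt_one 1 (by rwa [Real.norm_eq_abs, abs_abs])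
  have h2 : Summable (fun j : ℕ => |r| ^ j) :=
    summable_geometric_of_lt_one (abs_nonneg r) hr
  simpa [add_mul, pow_one] using h1.add h2

/-- Let `f_n(x) = ∑_{j=0}^{∞} x^j H_{j+1}^{(n)}` for `|x| < 1`. Then
`f_0(x) = 1/(1−x)`, and for every `n ≥ 1` and every `x` with `0 < |x| < 1`,
`f_n(x) = (1/(x(1−x))) ∫_0^x f_{n−1}(y) dy`. -/
theorem stmt13 :
    (∀ x : ℝ, |x| < 1 → (∑' j : ℕ, x ^ j * genH 0 (j + 1)) = 1 / (1 - x)) ∧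
    (∀ n : ℕ, 1 ≤ n → ∀ x : ℝ, 0 < |x| → |x| < 1 →
      (∑' j : ℕ, x ^ j * genH n (j + 1))
        = 1 / (x * (1 - x)) * ∫ y in (0 : ℝ)..x, ∑' j : ℕ, y ^ j * genH (n - 1) (j + 1)) := by
  constructor
  · intro x hx
    have : ∀ j : ℕ, x ^ j * genH 0 (j + 1) = x ^ j := by intro j; simp [genH]
    rw [tsum_congr this, tsum_geometric_of_norm_lt_one (by rwa [Real.norm_eq_abs]),
      one_div]
  · intro n hn x hx0 hx1
    obtain ⟨m, rfl⟩ : ∃ m, n = m + 1 := ⟨n - 1, by omega⟩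
    simp only [Nat.add_sub_cancel]
    set a : ℕ → ℝ := fun j => genH m (j + 1) with ha
    set b : ℕ → ℝ := fun j => genH (m + 1) (j + 1) with hb
    have hxne : x ≠ 0 := fun h => by simp [h] at hx0
    have h1xne : (1 : ℝ) - x ≠ 0 := by
      have : x < 1 := lt_of_abs_lt hx1
      linarith
    -- Step A : the integral
    have habs_le : ∀ t ∈ Set.uIoc (0:ℝ) x, |t| ≤ |x| := by
      intro t ht
      obtain ⟨h1, h2⟩ := ht
      rw [abs_le]
      constructor
      · have h3 : -|x| ≤ min 0 x := le_min (neg_nonpos.mpr (abs_nonneg x)) (neg_abs_le x)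
        have h4 : (min 0 x : ℝ) ≤ t := le_of_lt h1
        linarith
      · exact h2.trans (max_le (abs_nonneg x) (le_abs_self x))
    have hstepA :
        (∫ y in (0:ℝ)..x, ∑' j : ℕ, y ^ j * a j)
          = ∑' j : ℕ, x ^ (j + 1) * (a j / (j + 1)) := by
      have hS : HasSum (fun j : ℕ => ∫ t in (0:ℝ)..x, t ^ j * a j)
          (∫ y in (0:ℝ)..x, ∑' j : ℕ, y ^ j * a j) := by
        refine intervalIntegral.hasSum_integral_of_dominated_convergence
          (F := fun (j : ℕ) (t : ℝ) => t ^ j * a j)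
          (fun j (_ : ℝ) => ((j : ℝ) + 1) * |x| ^ j) ?_ ?_ ?_ ?_ ?_
        · intro j
          exact (Continuous.aestronglyMeasurable (by continuity))
        · intro j
          filter_upwards with t ht
          rw [Real.norm_eq_abs, abs_mul, abs_pow]
          have h1 : a j ≤ (j + 1 : ℝ) := by
            have := genH_le m (j+1) (by omega)
            push_cast at this; simpa [ha] using this
          have h2 : |a j| = a j := abs_of_nonneg (genH_nonneg m (j+1))
          have h3 : |t| ^ j ≤ |x| ^ j := pow_le_pow_left₀ (abs_nonneg t) (habs_le t ht) j
          calc |t| ^ j * |a j| ≤ |x| ^ j * ((j:ℝ)+1) := by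
                apply mul_le_mul h3 (by rw [h2]; exact h1) (abs_nonneg _) (by positivity)
            _ = ((j:ℝ)+1) * |x| ^ j := by ring
        · filter_upwards with t _; exact aux_summable hx1
        · exact intervalIntegrable_const
        · filter_upwards with t ht
          exact (genH_summable m ((habs_le t ht).trans_lt hx1)).hasSum
      rw [← hS.tsum_eq]
      refine tsum_congr fun j => ?_
      rw [intervalIntegral.integral_mul_const, integral_pow]
      push_cast
      ring
    -- Step B : x * (1 - x) * S = the same series
    have hsumb : Summable (fun j : ℕ => x ^ j * b j) := genH_summable (m+1) hx1
    have hsum1 : Summable (fun j : ℕ => x ^ (j+1) * b j) := by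
      have := hsumb.mul_left x
      refine this.congr fun j => ?_
      ring
    have hg0 : genH (m+1) 0 = 0 := by simp [genH]
    have hsumg : Summable (fun j : ℕ => x ^ (j+1) * genH (m+1) j) := by
      refine Summable.of_norm_bounded (aux_summable hx1) fun j => ?_
      rw [Real.norm_eq_abs, abs_mul, abs_pow, abs_of_nonneg (genH_nonneg _ j)]
      rcases Nat.eq_zero_or_pos j with h | h
      · simp [h, hg0]
      · have h1 : genH (m+1) j ≤ (j : ℝ) := genH_le (m+1) j h
        have h2 : |x| ^ (j+1) ≤ |x| ^ j :=
          pow_le_pow_of_le_one (abs_nonneg x) hx1.le (by omega)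
        calc |x| ^ (j+1) * genH (m+1) j ≤ |x| ^ j * ((j:ℝ)+1) := by
              apply mul_le_mul h2 (h1.trans (by linarith)) (genH_nonneg _ j) (by positivity)
          _ = ((j:ℝ)+1) * |x| ^ j := by ring
    have hshift : (∑' j : ℕ, x ^ (j+1) * genH (m+1) j)
        = ∑' j : ℕ, x ^ (j+2) * b j := by
      rw [Summable.tsum_eq_zero_add hsumg]
      simp [hg0, hb]
    have hstepB : x * (1 - x) * (∑' j : ℕ, x ^ j * b j)
        = ∑' j : ℕ, x ^ (j + 1) * (a j / (j + 1)) := by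
      have e1 : x * (1 - x) * (∑' j : ℕ, x ^ j * b j)
          = (∑' j : ℕ, x ^ (j+1) * b j) - ∑' j : ℕ, x ^ (j+2) * b j := by
        have t1 : (∑' j : ℕ, x ^ (j+1) * b j) = x * ∑' j : ℕ, x ^ j * b j := by
          rw [← tsum_mul_left]; exact tsum_congr fun j => by ring
        have t2 : (∑' j : ℕ, x ^ (j+2) * b j) = x ^ 2 * ∑' j : ℕ, x ^ j * b j := by
          rw [← tsum_mul_left]; exact tsum_congr fun j => by ring
        rw [t1, t2]; ring
      rw [e1, ← hshift, ← Summable.tsum_sub hsum1 hsumg]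
      refine tsum_congr fun j => ?_
      have := genH_rec m j
      have hb' : b j = genH (m+1) j + a j / ((j:ℝ)+1) := by
        simpa [hb, ha] using this
      rw [hb']
      push_cast
      ring
    rw [hstepA, ← hstepB]
    field_simp
    rfl
end
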